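/- Let k districts each have agents with positions in ℝ, let r_d be the rightmost agent position of district d, and let w be the ⌈(1 - 1/√2)k⌉-th smallest of the r_d. Then for every o ∈ ℝ with w < o: ∑_d max_{i ∈ d} |x_i - w| ≤ (1 + √2) · ∑_d max_{i ∈ d} |x_i - o|. -/

import Mathlib

set_option maxHeartbeats 1000000

/-- Case `w < o` of the Sum-of-Max upper bound for the
⌈(1-1/√2)k⌉-Leftmost-of-Rightmost mechanism. -/
theorem stmt_12 {ι : Type*} [Fintype ι] (k : ℕ) (hk : 0 < k)
    (dst : ι → Fin k) (x : ι → ℝ)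
    (hne : ∀ j : Fin k, (Finset.univ.filter fun i => dst i = j).Nonempty)
    (r : Fin k → ℝ)
    (hr : ∀ j, r j = (Finset.univ.filter fun i => dst i = j).sup' (hne j) x)
    (w : ℝ)
    (hw : w = ((Finset.univ.val.map r).sort (· ≤ ·)).getD
        (⌈(1 - 1 / Real.sqrt 2) * (k : ℝ)⌉₊ - 1) 0)
    (o : ℝ) (ho : w < o) :
    ∑ j : Fin k, (Finset.univ.filter fun i => dst i = j).sup' (hne j) (fun i => |x i - w|)
      ≤ (1 + Real.sqrt 2) *
        ∑ j : Fin k, (Finset.univ.filter fun i => dst i = j).sup' (hne j)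
          (fun i => |x i - o|) := by
  have hs2 : Real.sqrt 2 ^ 2 = 2 := Real.sq_sqrt (by norm_num)
  have hs1 : (1:ℝ) < Real.sqrt 2 := by nlinarith [Real.sqrt_nonneg 2]
  set s := Real.sqrt 2 with hsdef
  have hspos : (0:ℝ) < s := by linarith
  set m := ⌈(1 - 1 / s) * (k : ℝ)⌉₊ with hm
  have hfac : (0:ℝ) < 1 - 1/s := by
    rw [sub_pos, div_lt_one hspos]; exact hs1
  have hm1 : 1 ≤ m := by
    rw [hm, Nat.one_le_ceil_iff]
    have : (0:ℝ) < (k:ℝ) := Nat.cast_pos.mpr hk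
    positivity
  have hkpos : (0:ℝ) < (k:ℝ) := Nat.cast_pos.mpr hk
  have hmk : m ≤ k := by
    rw [hm, Nat.ceil_le]
    have h0 : (0:ℝ) ≤ 1/s := by positivity
    nlinarith
  set l := ((Finset.univ.val.map r).sort (· ≤ ·)) with hl
  have hlen : l.length = k := by
    simp [hl, Multiset.length_sort]
  have hm1k : m - 1 < l.length := by omega
  have hwget : w = l[m-1]'hm1k := by rw [hw, List.getD_eq_getElem l 0 hm1k]
  have hsorted : l.Pairwise (· ≤ ·) := Multiset.pairwise_sort _ _
  -- every element of l.take m is ≤ w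
  have htake : ∀ a ∈ l.take m, a ≤ w := by
    intro a ha
    rw [List.mem_take_iff_getElem] at ha
    obtain ⟨i, hi, rfl⟩ := ha
    have hi' : i < m := lt_of_lt_of_le hi (min_le_left _ _)
    rw [hwget]
    exact hsorted.rel_get_of_le (a := ⟨i, _⟩) (b := ⟨m-1, hm1k⟩) (by simp; omega)
  -- count of elements ≤ w
  have hcount : m ≤ l.countP (fun a => decide (a ≤ w)) := by
    conv_rhs => rw [← List.take_append_drop m l]
    rw [List.countP_append]
    have : (l.take m).countP (fun a => decide (a ≤ w)) = (l.take m).length := by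
      rw [List.countP_eq_length]
      intro a ha; simpa using htake a ha
    rw [this, List.length_take]
    omega
  set L := Finset.univ.filter (fun j : Fin k => r j ≤ w) with hL
  have hLcard : m ≤ L.card := by
    have h1 : (Multiset.countP (fun a => a ≤ w) (Finset.univ.val.map r)) = L.card := by
      rw [Multiset.countP_map]
      rfl
    have h2 : (Multiset.countP (fun a => a ≤ w) (Finset.univ.val.map r))
        = l.countP (fun a => decide (a ≤ w)) := by
      rw [← Multiset.sort_eq (Finset.univ.val.map r) (· ≤ ·), ← hl, Multiset.coe_countP]
    omega
  -- main argument
  have hcpos : (0:ℝ) < o - w := by linarith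
  set c := o - w with hc
  have hxle : ∀ j : Fin k, ∀ i ∈ (Finset.univ.filter fun i => dst i = j), x i ≤ r j := by
    intro j i hi
    rw [hr j]
    exact Finset.le_sup' x hi
  set Sw := fun j : Fin k =>
    (Finset.univ.filter fun i => dst i = j).sup' (hne j) (fun i => |x i - w|) with hSw
  set So := fun j : Fin k =>
    (Finset.univ.filter fun i => dst i = j).sup' (hne j) (fun i => |x i - o|) with hSo
  have hleSo : ∀ (j : Fin k), ∀ i ∈ (Finset.univ.filter fun i => dst i = j),
      |x i - o| ≤ So j := by
    intro j i hi
    exact Finset.le_sup' (fun i => |x i - o|) hi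
  have key1 : ∀ j ∈ L, Sw j ≤ So j - c := by
    intro j hj
    have hjw : r j ≤ w := by
      rw [hL] at hj
      exact (Finset.mem_filter.mp hj).2
    apply Finset.sup'_le
    intro i hi
    have h1 : x i ≤ w := le_trans (hxle j i hi) hjw
    have h2 : |x i - o| ≤ So j := hleSo j i hi
    have e1 : |x i - w| = w - x i := by rw [abs_of_nonpos (by linarith)]; ring
    have e2 : |x i - o| = o - x i := by rw [abs_of_nonpos (by linarith)]; ring
    rw [e1]; rw [e2] at h2; linarith
  have key2 : ∀ j : Fin k, Sw j ≤ So j + c := by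
    intro j
    apply Finset.sup'_le
    intro i hi
    have h2 : |x i - o| ≤ So j := hleSo j i hi
    have h3 : |x i - w| ≤ |x i - o| + c := by
      calc |x i - w| = |(x i - o) + (o - w)| := by ring_nf
        _ ≤ |x i - o| + |o - w| := abs_add_le _ _
        _ = |x i - o| + c := by rw [abs_of_pos hcpos]
    linarith
  have key3 : ∀ j ∈ L, c ≤ So j := by
    intro j hj
    have hjw : r j ≤ w := by
      rw [hL] at hj
      exact (Finset.mem_filter.mp hj).2
    obtain ⟨i, hi⟩ := hne j
    have h1 : x i ≤ w := le_trans (hxle j i hi) hjw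
    have h2 : |x i - o| ≤ So j := hleSo j i hi
    have e2 : |x i - o| = o - x i := by rw [abs_of_nonpos (by linarith)]; ring
    rw [e2] at h2; linarith
  have key4 : ∀ j : Fin k, (0:ℝ) ≤ So j := by
    intro j
    obtain ⟨i, hi⟩ := hne j
    exact le_trans (abs_nonneg _) (hleSo j i hi)
  set Lc := Finset.univ.filter (fun j : Fin k => ¬ r j ≤ w) with hLc
  have hsplitw : ∑ j ∈ L, Sw j + ∑ j ∈ Lc, Sw j = ∑ j : Fin k, Sw j :=
    Finset.sum_filter_add_sum_filter_not Finset.univ _ Sw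
  have hsplito : ∑ j ∈ L, So j + ∑ j ∈ Lc, So j = ∑ j : Fin k, So j :=
    Finset.sum_filter_add_sum_filter_not Finset.univ _ So
  have hcardsum : L.card + Lc.card = k := by
    rw [hL, hLc]
    rw [Finset.card_filter_add_card_filter_not]
    simp
  have hb1 : ∑ j ∈ L, Sw j ≤ ∑ j ∈ L, So j - L.card * c := by
    calc ∑ j ∈ L, Sw j ≤ ∑ j ∈ L, (So j - c) := Finset.sum_le_sum key1
      _ = ∑ j ∈ L, So j - L.card * c := by
          rw [Finset.sum_sub_distrib, Finset.sum_const, nsmul_eq_mul]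
  have hb2 : ∑ j ∈ Lc, Sw j ≤ ∑ j ∈ Lc, So j + Lc.card * c := by
    calc ∑ j ∈ Lc, Sw j ≤ ∑ j ∈ Lc, (So j + c) := Finset.sum_le_sum (fun j _ => key2 j)
      _ = ∑ j ∈ Lc, So j + Lc.card * c := by
          rw [Finset.sum_add_distrib, Finset.sum_const, nsmul_eq_mul]
  have hb3 : (L.card : ℝ) * c ≤ ∑ j ∈ L, So j := by
    calc (L.card : ℝ) * c = ∑ _j ∈ L, c := by rw [Finset.sum_const, nsmul_eq_mul]
      _ ≤ ∑ j ∈ L, So j := Finset.sum_le_sum key3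
  have hb4 : (0:ℝ) ≤ ∑ j ∈ Lc, So j := Finset.sum_nonneg (fun j _ => key4 j)
  set n := (L.card : ℝ) with hn
  have hnm : (1 - 1/s) * (k:ℝ) ≤ n := by
    calc (1 - 1/s) * (k:ℝ) ≤ (m:ℝ) := Nat.le_ceil _
      _ ≤ n := by rw [hn]; exact_mod_cast hLcard
  have hsn : (s - 1) * (k:ℝ) ≤ s * n := by
    have h := mul_le_mul_of_nonneg_left hnm hspos.le
    have e : s * ((1 - 1/s) * (k:ℝ)) = (s - 1) * (k:ℝ) := by
      field_simp
    linarith [e ▸ h]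
  have hK : (k:ℝ) ≤ (2 + s) * n := by
    nlinarith [mul_le_mul_of_nonneg_left hsn (by linarith : (0:ℝ) ≤ 2 + s)]
  have hLcR : (Lc.card : ℝ) = (k:ℝ) - n := by
    rw [hn]
    have := hcardsum
    push_cast [← this]
    ring
  have hfin : ((k:ℝ) - 2*n) * c ≤ s * (n * c) := by
    nlinarith [mul_le_mul_of_nonneg_right hK hcpos.le]
  have hsA : s * (n * c) ≤ s * (∑ j ∈ L, So j) :=
    mul_le_mul_of_nonneg_left hb3 (by linarith)
  have hsB : (0:ℝ) ≤ s * (∑ j ∈ Lc, So j) := mul_nonneg (by linarith) hb4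
  rw [← hsplitw, ← hsplito]
  rw [hLcR] at hb2
  nlinarith [hb1, hb2, hfin, hsA, hsB]
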